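/- The geometric mean of positive definite matrices is symmetric: A # B = B # A, where A # B := A^{1/2}(A^{-1/2} B A^{-1/2})^{1/2} A^{1/2}. -/

import Mathlib

set_option maxHeartbeats 1000000
open Matrix

section

open scoped ComplexOrder

/-- The positive semidefinite square root of a positive semidefinite matrix
(removed from Mathlib; restored with its old definition). -/
noncomputable def Matrix.PosSemidef.sqrt {n 𝕜 : Type*} [Fintype n] [RCLike 𝕜] [DecidableEq n]
    {A : Matrix n n 𝕜} (hA : A.PosSemidef) : Matrix n n 𝕜 :=
  hA.1.eigenvectorUnitary.1 * diagonal ((↑) ∘ (√·) ∘ hA.1.eigenvalues) *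
  (star hA.1.eigenvectorUnitary : Matrix n n 𝕜)

end

section
open scoped ComplexOrder MatrixOrder

theorem Matrix.PosSemidef.sqrt_eq_cfcSqrt {n 𝕜 : Type*} [Fintype n] [RCLike 𝕜] [DecidableEq n]
    {A : Matrix n n 𝕜} (hA : A.PosSemidef) : hA.sqrt = CFC.sqrt A := by
  rw [CFC.sqrt_eq_real_sqrt A hA.nonneg,
    cfcₙ_eq_cfc (hf := Real.continuous_sqrt.continuousOn) (hf0 := Real.sqrt_zero), hA.1.cfc_eq, IsHermitian.cfc, Unitary.conjStarAlgAut_apply]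
  rfl

theorem Matrix.PosSemidef.sqrt_mul_self {n 𝕜 : Type*} [Fintype n] [RCLike 𝕜] [DecidableEq n]
    {A : Matrix n n 𝕜} (hA : A.PosSemidef) : hA.sqrt * hA.sqrt = A := by
  rw [hA.sqrt_eq_cfcSqrt]
  exact CFC.sqrt_mul_sqrt_self A hA.nonneg

theorem Matrix.PosSemidef.posSemidef_sqrt {n 𝕜 : Type*} [Fintype n] [RCLike 𝕜] [DecidableEq n]
    {A : Matrix n n 𝕜} (hA : A.PosSemidef) : hA.sqrt.PosSemidef := by
  rw [hA.sqrt_eq_cfcSqrt]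
  exact (CFC.sqrt_nonneg A).posSemidef

theorem Matrix.PosSemidef.eq_sqrt_of_sq_eq {n 𝕜 : Type*} [Fintype n] [RCLike 𝕜] [DecidableEq n]
    {A : Matrix n n 𝕜} (hA : A.PosSemidef) {B : Matrix n n 𝕜} (hB : B.PosSemidef)
    (h : A ^ 2 = B) : A = hB.sqrt := by
  rw [hB.sqrt_eq_cfcSqrt]
  exact (CFC.sqrt_unique (by rw [← pow_two, h]) hA.nonneg).symm

end


open Matrix

/-- The geometric mean of positive definite matrices is symmetric in its arguments:
A # B = B # A, where A # B := A^{1/2} (A^{-1/2} B A^{-1/2})^{1/2} A^{1/2}. -/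
theorem matrix_geometric_mean_symm
    {d : ℕ}
    (A B : Matrix (Fin d) (Fin d) ℝ) (hA : A.PosDef) (hB : B.PosDef)
    (hA' : ((hA.posSemidef.sqrt)⁻¹ * B * (hA.posSemidef.sqrt)⁻¹).PosSemidef)
    (hB' : ((hB.posSemidef.sqrt)⁻¹ * A * (hB.posSemidef.sqrt)⁻¹).PosSemidef) :
    hA.posSemidef.sqrt * hA'.sqrt * hA.posSemidef.sqrt =
      hB.posSemidef.sqrt * hB'.sqrt * hB.posSemidef.sqrt := by
  set S := hA.posSemidef.sqrt with hSdef
  set T := hB.posSemidef.sqrt with hTdef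
  set V := hA'.sqrt with hVdef
  set W := hB'.sqrt with hWdef
  have hS2 : S * S = A := hA.posSemidef.sqrt_mul_self
  have hT2 : T * T = B := hB.posSemidef.sqrt_mul_self
  have hV2 : V * V = S⁻¹ * B * S⁻¹ := hA'.sqrt_mul_self
  have hW2 : W * W = T⁻¹ * A * T⁻¹ := hB'.sqrt_mul_self
  have hAdet : IsUnit A.det := isUnit_iff_ne_zero.2 (ne_of_gt hA.det_pos)
  have hBdet : IsUnit B.det := isUnit_iff_ne_zero.2 (ne_of_gt hB.det_pos)
  have hSdet : IsUnit S.det := by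
    have : S.det * S.det = A.det := by rw [← det_mul, hS2]
    exact isUnit_of_mul_isUnit_left (this ▸ hAdet)
  have hTdet : IsUnit T.det := by
    have : T.det * T.det = B.det := by rw [← det_mul, hT2]
    exact isUnit_of_mul_isUnit_left (this ▸ hBdet)
  have hWdet : IsUnit W.det := by
    have h1 : W.det * W.det = T⁻¹.det * A.det * T⁻¹.det := by
      rw [← det_mul, hW2, det_mul, det_mul]
    have hTinv : IsUnit T⁻¹.det := T.isUnit_nonsing_inv_det hTdet
    exact isUnit_of_mul_isUnit_left (h1 ▸ ((hTinv.mul hAdet).mul hTinv))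
  have hSH : Sᴴ = S := hA.posSemidef.posSemidef_sqrt.isHermitian
  have hTH : Tᴴ = T := hB.posSemidef.posSemidef_sqrt.isHermitian
  -- A = T * (W * W) * T
  have hATW : A = T * (W * W) * T := by
    rw [hW2]
    simp only [Matrix.mul_assoc]
    rw [Matrix.nonsing_inv_mul _ hTdet, Matrix.mul_one, ← Matrix.mul_assoc,
      Matrix.mul_nonsing_inv _ hTdet, Matrix.one_mul]
  -- key: Y := T * W * T satisfies Y * A⁻¹ * Y = B
  have hY : (T * W * T) * A⁻¹ * (T * W * T) = B := by
    rw [hATW, Matrix.mul_inv_rev, Matrix.mul_inv_rev, Matrix.mul_inv_rev W W]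
    simp only [Matrix.mul_assoc]
    rw [Matrix.mul_nonsing_inv_cancel_left _ _ hTdet,
      Matrix.mul_nonsing_inv_cancel_left _ _ hWdet,
      Matrix.nonsing_inv_mul_cancel_left _ _ hTdet,
      Matrix.nonsing_inv_mul_cancel_left _ _ hWdet, hT2]
  -- Z := S⁻¹ * (T * W * T) * S⁻¹ is PSD and squares to S⁻¹ * B * S⁻¹
  have hYpsd : (T * W * T).PosSemidef := by
    have := (hB'.posSemidef_sqrt).mul_mul_conjTranspose_same T
    rwa [hTH] at this
  have hSinvH : (S⁻¹)ᴴ = S⁻¹ := by rw [conjTranspose_nonsing_inv, hSH]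
  have hZpsd : (S⁻¹ * (T * W * T) * S⁻¹).PosSemidef := by
    have := hYpsd.mul_mul_conjTranspose_same S⁻¹
    rwa [hSinvH] at this
  have hAinv : A⁻¹ = S⁻¹ * S⁻¹ := by rw [← hS2, Matrix.mul_inv_rev]
  have hZsq : (S⁻¹ * (T * W * T) * S⁻¹) ^ 2 = S⁻¹ * B * S⁻¹ := by
    rw [pow_two]
    calc (S⁻¹ * (T * W * T) * S⁻¹) * (S⁻¹ * (T * W * T) * S⁻¹)
        = S⁻¹ * ((T * W * T) * (S⁻¹ * S⁻¹) * (T * W * T)) * S⁻¹ := by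
          simp only [Matrix.mul_assoc]
      _ = S⁻¹ * B * S⁻¹ := by rw [← hAinv, hY]
  have hZ : S⁻¹ * (T * W * T) * S⁻¹ = V := hZpsd.eq_sqrt_of_sq_eq hA' hZsq
  -- conclude
  have : S * (S⁻¹ * (T * W * T) * S⁻¹) * S = S * V * S := by rw [hZ]
  calc S * V * S = S * (S⁻¹ * (T * W * T) * S⁻¹) * S := by rw [hZ]
    _ = (S * S⁻¹) * (T * W * T) * (S⁻¹ * S) := by simp only [Matrix.mul_assoc]
    _ = T * W * T := by rw [Matrix.mul_nonsing_inv _ hSdet, Matrix.nonsing_inv_mul _ hSdet,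
          Matrix.one_mul, Matrix.mul_one]
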